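/- Let ω = exp(2 * π * I / 3) ∈ ℂ and define A : Fin 3 → Matrix (Fin 3) (Fin 3) ℂ by A 0 = (1/√2) • diagonal ![0, 1, -1], A 1 = (1/√2) • !![0, -1, 0; 0, 0, 0; ω, 0, 0], A 2 = (1/√2) • !![0, 0, 1; -ω, 0, 0; 0, 0, 0]. Then the family (fun p : Fin 3 × Fin 3 => (A p.1)ᴴ * (A p.2)) of 3×3 complex matrices is linearly independent over ℂ. -/

import Mathlib

open Matrix

set_option maxHeartbeats 1000000 in
theorem stmt12 (ω : ℂ) (hω : ω = Complex.exp (2 * Real.pi * Complex.I / 3))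
    (A : Fin 3 → Matrix (Fin 3) (Fin 3) ℂ)
    (hA0 : A 0 = (1 / (Real.sqrt 2 : ℂ)) • Matrix.diagonal ![0, 1, -1])
    (hA1 : A 1 = (1 / (Real.sqrt 2 : ℂ)) • !![0, -1, 0; 0, 0, 0; ω, 0, 0])
    (hA2 : A 2 = (1 / (Real.sqrt 2 : ℂ)) • !![0, 0, 1; -ω, 0, 0; 0, 0, 0]) :
    LinearIndependent ℂ (fun p : Fin 3 × Fin 3 => (A p.1)ᴴ * (A p.2)) := by
  have hω0 : ω ≠ 0 := hω ▸ Complex.exp_ne_zero _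
  have hc : (starRingEnd ℂ) ω * ω = 1 := by
    rw [hω, ← Complex.exp_conj, ← Complex.exp_add]
    rw [show (starRingEnd ℂ) (2 * ↑Real.pi * Complex.I / 3) = -(2 * ↑Real.pi * Complex.I / 3) by
      simp [map_div₀, Complex.conj_I, map_ofNat]; ring]
    rw [neg_add_cancel, Complex.exp_zero]
  have ht : ((Real.sqrt 2 : ℝ) : ℂ) ≠ 0 := by
    have : (0:ℝ) < Real.sqrt 2 := Real.sqrt_pos.mpr (by norm_num)
    exact_mod_cast this.ne'
  rw [Fintype.linearIndependent_iff]
  intro g hg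
  have h := fun r c : Fin 3 => congrFun (congrFun hg r) c
  simp only [Fintype.sum_prod_type, Fin.sum_univ_three, hA0, hA1, hA2,
    Matrix.sum_apply, Matrix.smul_apply, Matrix.mul_apply, Matrix.conjTranspose_apply,
    Matrix.diagonal, Matrix.of_apply, Matrix.cons_val', Matrix.cons_val_zero,
    Matrix.cons_val_one, Matrix.head_cons, Matrix.head_fin_const, Matrix.empty_val',
    Matrix.cons_val_fin_one, Matrix.zero_apply, smul_eq_mul, _root_.map_mul, map_div₀,
    _root_.map_one, Complex.conj_ofReal, Matrix.cons_val_two, Matrix.tail_cons] at h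
  have h00 := h 0 0; have h01 := h 0 1; have h02 := h 0 2
  have h10 := h 1 0; have h11 := h 1 1; have h12 := h 1 2
  have h20 := h 2 0; have h21 := h 2 1; have h22 := h 2 2
  simp only [Matrix.cons_val] at h00 h01 h02 h10 h11 h12 h20 h21 h22
  norm_num [Fin.ext_iff] at h00 h01 h02 h10 h11 h12 h20 h21 h22
  have q20 : g (2, 0) = 0 := h01.resolve_right hω0
  have q10 : g (1, 0) = 0 := h02.resolve_right hω0
  have q02 : g (0, 2) = 0 := h10.resolve_right hω0
  have q01 : g (0, 1) = 0 := h20.resolve_right hω0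
  have q12 : g (1, 2) = 0 := h12
  have q21 : g (2, 1) = 0 := h21
  field_simp [ht] at h00 h11 h22
  have e1 : g (1, 1) + g (2, 2) = 0 := by linear_combination h00 - (g (1,1) + g (2,2)) * hc
  have q00 : g (0, 0) = 0 := by linear_combination (h11 + h22 - e1) / 2
  have q11 : g (1, 1) = 0 := by linear_combination (h11 - h22 + e1) / 2
  have q22 : g (2, 2) = 0 := by linear_combination (h22 - h11 + e1) / 2
  intro p
  fin_cases p <;> assumption
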